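/- Set θ = (δ/m)^{2/δ} and κ = m(m/δ + δ/m − 1) with m = 1. Then as δ → 0⁺, the generalized Gamma density f_∞(x;θ,κ,δ) converges pointwise for each x > 0 to the Log-normal density f_LN(x) = (1/(√(2π) x)) exp(−(log x + 1)²/2). -/

import Mathlib

open MeasureTheory Set

noncomputable def genGammaDensity (θ κ δ x : ℝ) : ℝ :=
  (δ / θ ^ κ) * (1 / Real.Gamma (κ / δ)) * x ^ (κ - 1) * Real.exp (-(x / θ) ^ δ)

noncomputable def logNormalDensity (x : ℝ) : ℝ :=
  (1 / (Real.sqrt (2 * Real.pi) * x)) * Real.exp (-(Real.log x + 1) ^ 2 / 2)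

open Filter Real

noncomputable def stC : ℝ := Real.log (Real.sqrt (2 * Real.pi))

noncomputable def Dfun (a : ℝ) : ℝ :=
  Real.log (Real.Gamma a) - ((a - 1/2) * Real.log a - a + stC)

lemma fact_stirling :
    Tendsto (fun n : ℕ => Real.log n.factorial - ((n + 1/2) * Real.log n - n + stC))
      atTop (nhds 0) := by
  have h := Stirling.tendsto_stirlingSeq_sqrt_pi
  have hlog : Tendsto (fun n => Real.log (Stirling.stirlingSeq n)) atTop
      (nhds (Real.log (Real.sqrt Real.pi))) :=
    ((Real.continuousAt_log (by positivity)).tendsto).comp h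
  have h0 : Tendsto (fun n => Real.log (Stirling.stirlingSeq n) - Real.log (Real.sqrt Real.pi))
      atTop (nhds 0) := by
    simpa using hlog.sub_const (Real.log (Real.sqrt Real.pi))
  refine h0.congr' ?_
  filter_upwards [eventually_ge_atTop 1] with n hn
  have hn0 : (0:ℝ) < n := by exact_mod_cast hn
  have hfac : (0:ℝ) < n.factorial := by exact_mod_cast n.factorial_pos
  have h2n : (0:ℝ) < 2 * n := by linarith
  have hpow : (0:ℝ) < ((n:ℝ) / Real.exp 1) ^ n := by positivity
  rw [Stirling.stirlingSeq, Real.log_div hfac.ne' (by positivity), Real.log_mul (by positivity) hpow.ne',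
    Real.log_pow, Real.log_div hn0.ne' (Real.exp_pos 1).ne', Real.log_exp,
    Real.log_sqrt h2n.le, Real.log_mul two_ne_zero hn0.ne', stC,
    Real.log_sqrt (x := 2*Real.pi) (by positivity), Real.log_mul two_ne_zero Real.pi_pos.ne',
    Real.log_sqrt Real.pi_pos.le]
  ring

lemma gamma_nat_stirling :
    Tendsto (fun n : ℕ => Real.log (Real.Gamma n) - (((n:ℝ) - 1/2) * Real.log n - n + stC))
      atTop (nhds 0) := by
  refine fact_stirling.congr' ?_
  filter_upwards [eventually_ge_atTop 1] with n hn
  have hn0 : (0:ℝ) < n := by exact_mod_cast hn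
  have hΓ : Real.Gamma n = (n-1).factorial := by
    have := Real.Gamma_nat_eq_factorial (n-1)
    rwa [show ((n-1 : ℕ):ℝ) + 1 = (n:ℝ) by
      have : ((n-1:ℕ):ℝ) = (n:ℝ) - 1 := by
        exact_mod_cast Nat.cast_sub (R := ℝ) hn
      rw [this]; ring] at this
  have hfac : n.factorial = n * (n-1).factorial := by
    cases n with
    | zero => omega
    | succ m => simp [Nat.factorial_succ]
  have : Real.log n.factorial = Real.log n + Real.log (n-1).factorial := by
    rw [hfac]; push_cast
    exact Real.log_mul hn0.ne' (by exact_mod_cast (n-1).factorial_pos.ne')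
  rw [hΓ, this]; ring

lemma sandwich (a : ℝ) (ha : 2 ≤ a) :
    |Dfun a - Dfun (⌊a⌋₊ : ℝ)| ≤ 1 / (a - 1) := by
  set n : ℕ := ⌊a⌋₊ with hn
  have ha0 : (0:ℝ) < a := by linarith
  have hn2 : 2 ≤ n := Nat.le_floor (by exact_mod_cast ha)
  have hna : (n:ℝ) ≤ a := Nat.floor_le ha0.le
  have han : a < n + 1 := Nat.lt_floor_add_one a
  have hn0 : (0:ℝ) < n := by
    have : (2:ℝ) ≤ n := by exact_mod_cast hn2
    linarith
  set s : ℝ := a - n with hs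
  have hs0 : 0 ≤ s := by simp [hs]; linarith
  have hs1 : s < 1 := by simp [hs]; linarith
  have hΓa := Real.Gamma_pos_of_pos ha0
  have hΓn := Real.Gamma_pos_of_pos hn0
  have hΓa1 : Real.Gamma (a+1) = a * Real.Gamma a := Real.Gamma_add_one ha0.ne'
  have hΓn1 : Real.Gamma ((n:ℝ)+1) = n * Real.Gamma n := Real.Gamma_add_one hn0.ne'
  set G := Real.log (Real.Gamma a) with hG
  set Gn := Real.log (Real.Gamma (n:ℝ)) with hGn
  set La := Real.log a with hLa
  set Ln := Real.log (n:ℝ) with hLn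
  have cx := Real.convexOn_log_Gamma
  -- inequality (i)
  have h1 : G ≤ Gn + s * Ln := by
    have := cx.2 (mem_Ioi.mpr hn0) (mem_Ioi.mpr (by linarith : (0:ℝ) < (n:ℝ)+1))
      (by linarith : (0:ℝ) ≤ 1 - s) hs0 (by ring)
    simp only [smul_eq_mul, Function.comp_apply] at this
    rw [show (1-s) * (n:ℝ) + s * ((n:ℝ)+1) = a by simp [hs]; ring] at this
    rw [hΓn1, Real.log_mul hn0.ne' hΓn.ne'] at this
    rw [hG, hGn, hLn]; nlinarith [this]
  -- inequality (ii)
  have h2 : Ln + Gn ≤ G + (1 - s) * La := by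
    have := cx.2 (mem_Ioi.mpr ha0) (mem_Ioi.mpr (by linarith : (0:ℝ) < a+1))
      hs0 (by linarith : (0:ℝ) ≤ 1 - s) (by ring)
    simp only [smul_eq_mul, Function.comp_apply] at this
    rw [show s * a + (1-s) * (a+1) = (n:ℝ)+1 by simp [hs]; ring] at this
    rw [hΓn1, Real.log_mul hn0.ne' hΓn.ne', hΓa1, Real.log_mul ha0.ne' hΓa.ne'] at this
    rw [hG, hGn, hLa, hLn]; nlinarith [this]
  -- log inequalities
  have l1 : s ≤ a * (La - Ln) := by
    have h := Real.log_le_sub_one_of_pos (div_pos hn0 ha0)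
    rw [Real.log_div hn0.ne' ha0.ne', ← hLa, ← hLn] at h
    have hc : a * ((n:ℝ)/a) = n := by field_simp
    nlinarith [mul_le_mul_of_nonneg_left h ha0.le, hc]
  have l2 : (n:ℝ) * (La - Ln) ≤ s := by
    have h := Real.log_le_sub_one_of_pos (div_pos ha0 hn0)
    rw [Real.log_div ha0.ne' hn0.ne', ← hLa, ← hLn] at h
    have hc : (n:ℝ) * (a/(n:ℝ)) = a := by field_simp
    nlinarith [mul_le_mul_of_nonneg_left h hn0.le, hc]
  have hd0 : 0 ≤ La - Ln := by nlinarith [l1, hs0, ha0]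
  have hd1 : (a - 1) * (La - Ln) ≤ 1 := by
    nlinarith [l2, hs1, mul_nonneg (by linarith : (0:ℝ) ≤ (n:ℝ) - (a-1)) hd0]
  have hp1 : s * La + (n:ℝ) * La = a * La := by rw [hs]; ring
  have hp2 : s * Ln + (n:ℝ) * Ln = a * Ln := by rw [hs]; ring
  -- assemble
  have hDdiff : Dfun a - Dfun (n:ℝ) =
      G - Gn - (a - 1/2) * La + ((n:ℝ) - 1/2) * Ln + s := by
    simp only [Dfun, hG, hGn, hLa, hLn, hs]; ring
  have key1 : G - Gn - (a - 1/2) * La + ((n:ℝ) - 1/2) * Ln + s ≤ (1/2) * (La - Ln) := by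
    linarith [h1, l1, hp2]
  have key2 : -(G - Gn - (a - 1/2) * La + ((n:ℝ) - 1/2) * Ln + s) ≤ (1/2) * (La - Ln) := by
    linarith [h2, l2, hp1, hp2]
  rw [hDdiff, abs_le]
  have ha1 : (0:ℝ) < a - 1 := by linarith
  constructor
  · rw [neg_le, le_div_iff₀ ha1]
    linarith [mul_le_mul_of_nonneg_right key2 ha1.le, hd1]
  · rw [le_div_iff₀ ha1]
    linarith [mul_le_mul_of_nonneg_right key1 ha1.le, hd1]

lemma gamma_nat_stirling' :
    Tendsto (fun n : ℕ => Dfun n) atTop (nhds 0) :=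
  gamma_nat_stirling.congr fun n => rfl

lemma stirling_real : Tendsto Dfun atTop (nhds 0) := by
  have hfl : Tendsto (fun a : ℝ => Dfun (⌊a⌋₊ : ℝ)) atTop (nhds 0) :=
    gamma_nat_stirling'.comp (tendsto_nat_floor_atTop (α := ℝ))
  have hg : Tendsto (fun a : ℝ => 1 / (a - 1)) atTop (nhds 0) := by
    have h1 : Tendsto (fun a : ℝ => a - 1) atTop atTop :=
      tendsto_atTop_add_const_right atTop (-1) (tendsto_id (α := ℝ))
    simpa [one_div, Pi.inv_def] using h1.inv_tendsto_atTop
  have hdiff : Tendsto (fun a : ℝ => Dfun a - Dfun (⌊a⌋₊ : ℝ)) atTop (nhds 0) := by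
    refine squeeze_zero_norm' ?_ hg
    filter_upwards [eventually_ge_atTop (2:ℝ)] with a ha
    simpa [Real.norm_eq_abs] using sandwich a ha
  have := hdiff.add hfl
  simpa using this

lemma exp_quad :
    Tendsto (fun u : ℝ => (Real.exp u - 1 - u) / u ^ 2) (nhdsWithin 0 {0}ᶜ) (nhds (1/2)) := by
  have key : Tendsto (fun u : ℝ => (Real.exp u - 1 - u) / u ^ 2 - 1/2)
      (nhdsWithin 0 {0}ᶜ) (nhds 0) := by
    have habs : Tendsto (fun u : ℝ => |u|) (nhdsWithin 0 {0}ᶜ) (nhds 0) := by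
      have := (continuous_abs.tendsto (0:ℝ)).mono_left (nhdsWithin_le_nhds (s := {0}ᶜ))
      simpa using this
    refine squeeze_zero_norm' ?_ habs
    have h1 : ∀ᶠ u : ℝ in nhdsWithin 0 {0}ᶜ, |u - 0| < 1 :=
      (eventually_abs_sub_lt 0 one_pos).filter_mono (nhdsWithin_le_nhds)
    filter_upwards [h1, self_mem_nhdsWithin] with u hu1 hu0
    simp only [sub_zero] at hu1
    have hu0' : u ≠ 0 := hu0
    have hb := Real.exp_bound hu1.le (n := 3) (by norm_num)
    have hsum : ∑ m ∈ Finset.range 3, u ^ m / m.factorial = 1 + u + u^2/2 := by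
      norm_num [Finset.sum_range_succ, Nat.factorial]
    rw [hsum] at hb
    have hu2 : (0:ℝ) < u^2 := by positivity
    have heq : (Real.exp u - 1 - u) / u ^ 2 - 1/2
        = (Real.exp u - (1 + u + u^2/2)) / u^2 := by
      field_simp
      ring
    rw [Real.norm_eq_abs, heq, abs_div, abs_of_pos hu2, div_le_iff₀ hu2]
    calc |Real.exp u - (1 + u + u^2/2)| ≤ |u|^3 * ((3:ℕ).succ / ((3:ℕ).factorial * 3)) := hb
      _ ≤ |u|^3 * 1 := by
          apply mul_le_mul_of_nonneg_left _ (by positivity)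
          norm_num [Nat.factorial]
      _ = |u| * u^2 := by
          rw [mul_one, show (3:ℕ) = 2+1 from rfl, pow_succ, sq_abs]
          ring
  have := key.add_const (1/2)
  simpa using this

lemma log_quad :
    Tendsto (fun δ : ℝ => (Real.log (1 - δ + δ^2) + δ) / δ ^ 2)
      (nhdsWithin 0 (Ioi 0)) (nhds (1/2)) := by
  have key : Tendsto (fun δ : ℝ => (Real.log (1 - δ + δ^2) + δ) / δ ^ 2 - 1/2)
      (nhdsWithin 0 (Ioi 0)) (nhds 0) := by
    have hg : Tendsto (fun δ : ℝ => 4 * δ) (nhdsWithin 0 (Ioi 0)) (nhds 0) := by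
      have hg0 : Tendsto (fun δ : ℝ => 4 * δ) (nhds (0:ℝ)) (nhds (4 * 0)) :=
        (continuous_const.mul continuous_id).tendsto _
      simpa using hg0.mono_left (nhdsWithin_le_nhds (s := Ioi 0))
    refine squeeze_zero_norm' ?_ hg
    have h1 : ∀ᶠ δ : ℝ in nhdsWithin 0 (Ioi 0), |δ - 0| < 1/2 :=
      (eventually_abs_sub_lt 0 (by norm_num)).filter_mono nhdsWithin_le_nhds
    filter_upwards [h1, self_mem_nhdsWithin] with δ hd1 hd0
    simp only [sub_zero] at hd1
    have hδ : 0 < δ := hd0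
    have hd2 : δ < 1/2 := by rwa [abs_of_pos hδ] at hd1
    set y : ℝ := δ - δ^2 with hy
    have hy0 : 0 ≤ y := by nlinarith
    have hy1 : |y| < 1 := by rw [abs_of_nonneg hy0]; nlinarith
    have hyδ : y ≤ δ := by nlinarith
    have hb := Real.abs_log_sub_add_sum_range_le hy1 2
    have hsum : ∑ i ∈ Finset.range 2, y ^ (i+1) / (i+1) = y + y^2/2 := by
      simp [Finset.sum_range_succ]
      ring
    rw [hsum] at hb
    have h1y : 1 - y = 1 - δ + δ^2 := by rw [hy]; ring
    rw [h1y] at hb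
    have hT : |y + y^2/2 + Real.log (1 - δ + δ^2)| ≤ 2 * δ^3 := by
      refine hb.trans ?_
      rw [abs_of_nonneg hy0]
      rw [div_le_iff₀ (by linarith : (0:ℝ) < 1 - y)]
      have : y^(2+1) ≤ δ^3 := by
        apply pow_le_pow_left₀ hy0 hyδ _
      nlinarith [pow_nonneg hy0 3, pow_pos hδ 3]
    have hδ2 : (0:ℝ) < δ^2 := by positivity
    have heq : (Real.log (1 - δ + δ^2) + δ) / δ ^ 2 - 1/2
        = ((y + y^2/2 + Real.log (1 - δ + δ^2)) + (δ^3 - δ^4/2)) / δ^2 := by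
      rw [hy]; field_simp; ring
    rw [Real.norm_eq_abs, heq, abs_div, abs_of_pos hδ2, div_le_iff₀ hδ2]
    have habs : |(y + y^2/2 + Real.log (1 - δ + δ^2)) + (δ^3 - δ^4/2)|
        ≤ 2*δ^3 + |δ^3 - δ^4/2| := by
      refine (abs_add_le _ _).trans ?_
      gcongr
    refine habs.trans ?_
    have : |δ^3 - δ^4/2| ≤ δ^3 := by
      rw [abs_of_nonneg (by nlinarith)]; nlinarith
    nlinarith [pow_pos hδ 3]
  have := key.add_const (1/2)
  simpa using this

theorem genGamma_tendsto_logNormal (x : ℝ) (hx : 0 < x) :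
    Filter.Tendsto
      (fun δ : ℝ => genGammaDensity (δ ^ (2 / δ)) (1 / δ + δ - 1) δ x)
      (nhdsWithin 0 (Ioi 0)) (nhds (logNormalDensity x)) := by
  set L : ℝ := Real.log x with hL
  -- the exponent function
  set G : ℝ → ℝ := fun δ =>
    -(1 - δ + δ^2/2) * ((Real.log (1 - δ + δ^2) + δ) / δ ^ 2) + (δ/2 + (δ-2)*L)
      + (1 + δ*L - Real.exp (δ*L)) / δ^2 - stC - Dfun ((1/δ + δ - 1)/δ) with hG
  -- a(δ) → ∞
  have hatop : Tendsto (fun δ : ℝ => (1/δ + δ - 1)/δ) (nhdsWithin 0 (Ioi 0)) atTop := by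
    refine tendsto_atTop_mono' _ ?_ tendsto_inv_nhdsGT_zero
    filter_upwards [self_mem_nhdsWithin] with δ hδ
    have hδ0 : (0:ℝ) < δ := hδ
    have : (1/δ + δ - 1)/δ - δ⁻¹ = ((1/δ - 1))^2 := by field_simp; ring
    nlinarith [sq_nonneg (1/δ - 1), this]
  have hSt : Tendsto (fun δ : ℝ => Dfun ((1/δ + δ - 1)/δ)) (nhdsWithin 0 (Ioi 0)) (nhds 0) :=
    stirling_real.comp hatop
  -- ψ limit
  have hψ : Tendsto (fun δ : ℝ => (1 + δ*L - Real.exp (δ*L)) / δ^2)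
      (nhdsWithin 0 (Ioi 0)) (nhds (-(L^2)/2)) := by
    by_cases hL0 : L = 0
    · rw [hL0]
      simp only [mul_zero, Real.exp_zero]
      norm_num
    · have hcomp : Tendsto (fun δ : ℝ => δ * L) (nhdsWithin 0 (Ioi 0))
          (nhdsWithin 0 {0}ᶜ) := by
        rw [tendsto_nhdsWithin_iff]
        constructor
        · have h0 : Tendsto (fun δ : ℝ => δ * L) (nhds (0:ℝ)) (nhds (0 * L)) :=
            (continuous_id.mul continuous_const).tendsto _
          simpa using h0.mono_left nhdsWithin_le_nhds
        · filter_upwards [self_mem_nhdsWithin] with δ hδ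
          exact mul_ne_zero (ne_of_gt hδ) hL0
      have h2 := (exp_quad.comp hcomp).const_mul (-(L^2))
      have h3 : Tendsto (fun δ : ℝ =>
          -(L^2) * ((Real.exp (δ*L) - 1 - δ*L) / (δ*L)^2))
          (nhdsWithin 0 (Ioi 0)) (nhds (-(L^2) * (1/2))) := h2
      have h4 : -(L^2) * (1/2) = -(L^2)/2 := by ring
      rw [h4] at h3
      refine h3.congr' ?_
      filter_upwards [self_mem_nhdsWithin] with δ hδ
      have hδ0 : (0:ℝ) < δ := hδ
      field_simp
      ring
  -- polynomial factors
  have hpoly : Tendsto (fun δ : ℝ => -(1 - δ + δ^2/2)) (nhdsWithin 0 (Ioi 0)) (nhds (-1)) := by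
    have h0 : Tendsto (fun δ : ℝ => -(1 - δ + δ^2/2)) (nhds (0:ℝ))
        (nhds (-(1 - 0 + 0^2/2))) := (Continuous.tendsto (by continuity) _)
    have := h0.mono_left (nhdsWithin_le_nhds (s := Ioi 0))
    convert this using 2
    norm_num
  have hlin : Tendsto (fun δ : ℝ => δ/2 + (δ-2)*L) (nhdsWithin 0 (Ioi 0)) (nhds (-2*L)) := by
    have h0 : Tendsto (fun δ : ℝ => δ/2 + (δ-2)*L) (nhds (0:ℝ))
        (nhds (0/2 + (0-2)*L)) := (Continuous.tendsto (by continuity) _)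
    have := h0.mono_left (nhdsWithin_le_nhds (s := Ioi 0))
    convert this using 2
    ring
  -- the limit of G
  have hGlim : Tendsto G (nhdsWithin 0 (Ioi 0))
      (nhds ((-1 * (1/2) + -2*L + -(L^2)/2 - stC) - 0)) := by
    exact ((((hpoly.mul log_quad).add hlin).add hψ).sub_const stC).sub hSt
  -- exponentiate
  have hexp : Tendsto (fun δ => Real.exp (G δ)) (nhdsWithin 0 (Ioi 0))
      (nhds (Real.exp ((-1 * (1/2) + -2*L + -(L^2)/2 - stC) - 0))) :=
    (Real.continuous_exp.tendsto _).comp hGlim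
  have hval : Real.exp ((-1 * (1/2) + -2*L + -(L^2)/2 - stC) - 0) = logNormalDensity x := by
    have hs2 : (0:ℝ) < Real.sqrt (2 * Real.pi) := Real.sqrt_pos.mpr (by positivity)
    have h1 : Real.exp (stC + L) = Real.sqrt (2*Real.pi) * x := by
      rw [Real.exp_add]; unfold stC
      rw [Real.exp_log (by positivity), hL, Real.exp_log hx]
    have h2 : logNormalDensity x = Real.exp (-(stC+L)) * Real.exp (-(L+1)^2/2) := by
      rw [logNormalDensity, Real.exp_neg, h1, hL, one_div]
    rw [h2, ← Real.exp_add, Real.exp_eq_exp]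
    ring
  rw [← hval]
  -- pointwise equality
  refine hexp.congr' ?_
  filter_upwards [self_mem_nhdsWithin] with δ hδ
  have hδ0 : (0:ℝ) < δ := hδ
  have hu : (0:ℝ) < 1 - δ + δ^2 := by nlinarith [sq_nonneg (δ - 1), sq_nonneg δ]
  have hκδ : (1/δ + δ - 1)/δ = (1 - δ + δ^2)/δ^2 := by field_simp; ring
  have ha0 : (0:ℝ) < (1/δ + δ - 1)/δ := by rw [hκδ]; positivity
  have hΓpos := Real.Gamma_pos_of_pos ha0
  have hθ : (0:ℝ) < δ ^ (2/δ) := Real.rpow_pos_of_pos hδ0 _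
  have hlogΓ : Real.log (Real.Gamma ((1/δ + δ - 1)/δ)) =
      ((1/δ + δ - 1)/δ - 1/2) * Real.log ((1/δ + δ - 1)/δ) - (1/δ + δ - 1)/δ + stC
        + Dfun ((1/δ + δ - 1)/δ) := by
    rw [Dfun]; ring
  have hloga : Real.log ((1/δ + δ - 1)/δ) = Real.log (1 - δ + δ^2) - 2 * Real.log δ := by
    rw [hκδ, Real.log_div hu.ne' (by positivity), Real.log_pow]
    push_cast; ring
  have hθκ : (δ ^ (2/δ)) ^ (1/δ + δ - 1) =
      Real.exp ((1/δ + δ - 1) * ((2/δ) * Real.log δ)) := by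
    rw [Real.rpow_def_of_pos hθ, Real.log_rpow hδ0, mul_comm]
  have hxκ : x ^ ((1/δ + δ - 1) - 1) = Real.exp (((1/δ + δ - 1) - 1) * L) := by
    rw [Real.rpow_def_of_pos hx, mul_comm, hL]
  have hfrac : (x / δ ^ (2/δ)) ^ δ = Real.exp (δ * L) / δ^2 := by
    rw [Real.rpow_def_of_pos (div_pos hx hθ), Real.log_div hx.ne' hθ.ne',
      Real.log_rpow hδ0, sub_mul, Real.exp_sub]
    congr 1
    · rw [mul_comm, hL]
    · rw [show (2/δ * Real.log δ) * δ = Real.log (δ^2) by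
        rw [Real.log_pow]; push_cast; field_simp]
      exact Real.exp_log (by positivity)
  have hΓinv : 1 / Real.Gamma ((1/δ + δ - 1)/δ) =
      Real.exp (-(Real.log (Real.Gamma ((1/δ + δ - 1)/δ)))) := by
    rw [Real.exp_neg, Real.exp_log hΓpos, one_div]
  have key : genGammaDensity (δ ^ (2/δ)) (1/δ + δ - 1) δ x = Real.exp (G δ) := by
    rw [genGammaDensity, hθκ, hxκ, hfrac, hΓinv, div_eq_mul_inv, ← Real.exp_neg]
    nth_rewrite 1 [show δ = Real.exp (Real.log δ) from (Real.exp_log hδ0).symm]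
    rw [← Real.exp_add, ← Real.exp_add, ← Real.exp_add, ← Real.exp_add,
      Real.exp_eq_exp, hG]
    rw [hlogΓ, hloga]
    field_simp
    ring
  exact key.symm
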